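/- Let ϑ: (G,P) → (ℤ^N, ℤ₊^N) be a controlled map with the minimality property and let m ∈ ℤ₊^N. Then every p ∈ P with ϑ(p) ≥ m factors as p = rp' where r is the unique minimal element of ϑ⁻¹([m,∞]) ∩ P with r ≤ p. Moreover, if r is minimal in ϑ⁻¹([m,∞]) ∩ P but ϑ(r) ∉ [m, m+m'], then r ∨ q = ∞ for every q ∈ P with ϑ(q) ∈ [m, m+m']. -/

import Mathlib

/-- A quasi-lattice ordered group structure on a group `G`: a positive cone `P`
(submonoid with `P ∩ P⁻¹ = {1}`) such that any two elements of `P` with a common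
upper bound (for the left-invariant order `g ≤ h ↔ g⁻¹ * h ∈ P`) have a least
common upper bound in `P`. -/
structure QuasiLattice (G : Type*) [Group G] where
  P : Set G
  one_mem : (1 : G) ∈ P
  mul_mem : ∀ {a b : G}, a ∈ P → b ∈ P → a * b ∈ P
  antisymm' : ∀ g ∈ P, g⁻¹ ∈ P → g = 1
  lub_exists : ∀ p ∈ P, ∀ q ∈ P,
    (∃ r ∈ P, p⁻¹ * r ∈ P ∧ q⁻¹ * r ∈ P) →
    ∃ r ∈ P, p⁻¹ * r ∈ P ∧ q⁻¹ * r ∈ P ∧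
      ∀ s ∈ P, p⁻¹ * s ∈ P → q⁻¹ * s ∈ P → r⁻¹ * s ∈ P

namespace QuasiLattice

variable {G G' : Type*} [Group G] [Group G']

/-- The left-invariant partial order induced by the positive cone. -/
def le (Q : QuasiLattice G) (g h : G) : Prop := g⁻¹ * h ∈ Q.P

/-- `p` and `q` have a common upper bound in `P` (i.e. `p ∨ q < ∞`). -/
def HasCUB (Q : QuasiLattice G) (p q : G) : Prop := ∃ r ∈ Q.P, Q.le p r ∧ Q.le q r

/-- `r` is the least common upper bound of `p` and `q` in `P`. -/
def IsLub (Q : QuasiLattice G) (p q r : G) : Prop :=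
  r ∈ Q.P ∧ Q.le p r ∧ Q.le q r ∧ ∀ s ∈ Q.P, Q.le p s → Q.le q s → Q.le r s

end QuasiLattice

/-- A controlled map between quasi-lattice ordered groups: an order-preserving group
homomorphism, finite-to-one on `P`, respecting least upper bounds. -/
structure ControlledMap {G G' : Type*} [Group G] [Group G']
    (Q : QuasiLattice G) (Q' : QuasiLattice G') where
  toFun : G →* G'
  mapsP : ∀ p ∈ Q.P, toFun p ∈ Q'.P
  finite_fibers : ∀ g' : G', {p | p ∈ Q.P ∧ toFun p = g'}.Finite
  map_lub : ∀ p ∈ Q.P, ∀ q ∈ Q.P, ∀ r, Q.IsLub p q r →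
    Q'.IsLub (toFun p) (toFun q) (toFun r)

namespace ControlledMap

variable {G G' : Type*} [Group G] [Group G'] {Q : QuasiLattice G} {Q' : QuasiLattice G'}

/-- `p` is a minimal element of `ϑ⁻¹([m,∞]) ∩ P`. -/
def Minimal (θ : ControlledMap Q Q') (m : G') (p : G) : Prop :=
  p ∈ Q.P ∧ Q'.le m (θ.toFun p) ∧
    ∀ r ∈ Q.P, Q'.le m (θ.toFun r) → Q.le r p → r = p

/-- The minimality property of a controlled map: distinct minimal elements of
`ϑ⁻¹([m,∞]) ∩ P` have no common upper bound in `P`. -/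
def MinimalityProperty (θ : ControlledMap Q Q') : Prop :=
  ∀ m ∈ Q'.P, ∀ p q : G, θ.Minimal m p → θ.Minimal m q → p ≠ q → ¬ Q.HasCUB p q

end ControlledMap

/-- The quasi-lattice ordered group `(ℤ^κ, ℤ₊^κ)` (written multiplicatively). -/
def ZQL (κ : Type*) : QuasiLattice (Multiplicative (κ → ℤ)) where
  P := {x | ∀ i, 0 ≤ Multiplicative.toAdd x i}
  one_mem := fun i => le_refl 0
  mul_mem := fun {a b} ha hb i => add_nonneg (ha i) (hb i)
  antisymm' := fun g hg hg' => by
    have h : ∀ i, Multiplicative.toAdd g i = 0 := fun i => by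
      have h1 := hg i
      have h2 := hg' i
      simp only [toAdd_inv, Pi.neg_apply] at h2
      omega
    have : Multiplicative.toAdd g = 0 := funext h
    simpa using this
  lub_exists := fun p hp q hq _ => by
    refine ⟨Multiplicative.ofAdd
      (fun i => max (Multiplicative.toAdd p i) (Multiplicative.toAdd q i)), ?_, ?_, ?_, ?_⟩
    · intro i
      have := hp i
      simp only [toAdd_ofAdd]
      omega
    · intro i
      simp only [toAdd_mul, toAdd_inv, Pi.add_apply,
        Pi.neg_apply, toAdd_ofAdd]
      omega
    · intro i
      simp only [toAdd_mul, toAdd_inv, Pi.add_apply,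
        Pi.neg_apply, toAdd_ofAdd]
      omega
    · intro s _ hps hqs i
      have h1 := hps i
      have h2 := hqs i
      simp only [toAdd_mul, toAdd_inv, Pi.add_apply,
        Pi.neg_apply, toAdd_ofAdd] at h1 h2 ⊢
      omega

section Aux

variable {G : Type*} [Group G]

lemma QuasiLattice.myle_refl (Q : QuasiLattice G) (a : G) : Q.le a a := by
  simpa [QuasiLattice.le] using Q.one_mem

lemma QuasiLattice.myle_trans (Q : QuasiLattice G) {a b c : G}
    (h1 : Q.le a b) (h2 : Q.le b c) : Q.le a c := by
  have := Q.mul_mem h1 h2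
  simpa [QuasiLattice.le, mul_assoc] using this

lemma QuasiLattice.myle_antisymm (Q : QuasiLattice G) {a b : G}
    (h1 : Q.le a b) (h2 : Q.le b a) : a = b := by
  have h : a⁻¹ * b = 1 := Q.antisymm' _ h1 (by simpa [QuasiLattice.le] using h2)
  have := congrArg (fun x => a * x) h
  simpa using this.symm

lemma exists_minimal_in_finite (Q : QuasiLattice G) (S : Set G) (hS : S.Finite)
    {p : G} (hp : p ∈ S) :
    ∃ r ∈ S, Q.le r p ∧ ∀ x ∈ S, Q.le x r → x = r := by
  classical
  suffices h : ∀ n : ℕ, ∀ p ∈ S, ({x ∈ S | Q.le x p}).ncard ≤ n →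
      ∃ r ∈ S, Q.le r p ∧ ∀ x ∈ S, Q.le x r → x = r by
    exact h ({x ∈ S | Q.le x p}).ncard p hp le_rfl
  intro n
  induction n with
  | zero =>
    intro p hp hcard
    exfalso
    have hfin : ({x ∈ S | Q.le x p}).Finite := hS.subset (fun x hx => hx.1)
    have : ({x ∈ S | Q.le x p}) = ∅ := by
      rw [← Set.ncard_eq_zero hfin]; omega
    exact absurd this (Set.nonempty_iff_ne_empty.mp ⟨p, hp, Q.myle_refl p⟩)
  | succ n ih =>
    intro p hp hcard
    by_cases h : ∀ x ∈ S, Q.le x p → x = p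
    · exact ⟨p, hp, Q.myle_refl p, h⟩
    · push_neg at h
      obtain ⟨x, hxS, hxp, hxne⟩ := h
      have hsub : {y ∈ S | Q.le y x} ⊆ {y ∈ S | Q.le y p} \ {p} := by
        rintro y ⟨hyS, hyx⟩
        refine ⟨⟨hyS, Q.myle_trans hyx hxp⟩, ?_⟩
        rintro rfl
        exact hxne (Q.myle_antisymm hxp hyx)
      have hfinp : ({y ∈ S | Q.le y p}).Finite := hS.subset (fun y hy => hy.1)
      have hcard2 : ({y ∈ S | Q.le y x}).ncard ≤ n := by
        have h1 : ({y ∈ S | Q.le y x}).ncard ≤ (({y ∈ S | Q.le y p}) \ {p}).ncard :=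
          Set.ncard_le_ncard hsub (hfinp.subset Set.diff_subset)
        have h2 : (({y ∈ S | Q.le y p}) \ {p}).ncard
            = ({y ∈ S | Q.le y p}).ncard - 1 :=
          Set.ncard_diff_singleton_of_mem ⟨hp, Q.myle_refl p⟩
        have h3 : 0 < ({y ∈ S | Q.le y p}).ncard :=
          (Set.ncard_pos hfinp).mpr ⟨p, hp, Q.myle_refl p⟩
        omega
      obtain ⟨r, hrS, hrx, hrmin⟩ := ih x hxS hcard2
      exact ⟨r, hrS, Q.myle_trans hrx hxp, hrmin⟩

end Aux

/-- For a controlled map `ϑ : (G,P) → (ℤ^N, ℤ₊^N)` with the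
minimality property and `m ∈ ℤ₊^N`: every `p ∈ P` with `ϑ(p) ≥ m` factors as
`p = r p'` through a unique minimal element `r` of `ϑ⁻¹([m,∞]) ∩ P` with `r ≤ p`;
and if `r` is minimal in `ϑ⁻¹([m,∞]) ∩ P` with `ϑ(r) ∉ [m, m+m']`, then `r ∨ q = ∞`
for every `q ∈ P` with `ϑ(q) ∈ [m, m+m']`. -/
theorem controlledMap_minimality_factorisation {G : Type*} [Group G] {N : ℕ}
    {Q : QuasiLattice G} (θ : ControlledMap Q (ZQL (Fin N)))
    (hmin : θ.MinimalityProperty)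
    (m : Multiplicative (Fin N → ℤ)) (hm : m ∈ (ZQL (Fin N)).P) :
    (∀ p ∈ Q.P, (ZQL (Fin N)).le m (θ.toFun p) →
      ∃! r : G, θ.Minimal m r ∧ Q.le r p) ∧
    (∀ r : G, θ.Minimal m r →
      ∀ m' ∈ (ZQL (Fin N)).P, ¬ (ZQL (Fin N)).le (θ.toFun r) (m * m') →
        ∀ q ∈ Q.P, (ZQL (Fin N)).le m (θ.toFun q) →
          (ZQL (Fin N)).le (θ.toFun q) (m * m') → ¬ Q.HasCUB r q) := by
  classical
  have θ_mono : ∀ a b : G, Q.le a b →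
      (ZQL (Fin N)).le (θ.toFun a) (θ.toFun b) := by
    intro a b hab
    have := θ.mapsP _ hab
    simpa [QuasiLattice.le, map_mul, map_inv] using this
  -- existence of minimal elements below any p
  have exists_min : ∀ p ∈ Q.P, (ZQL (Fin N)).le m (θ.toFun p) →
      ∃ r : G, θ.Minimal m r ∧ Q.le r p := by
    intro p hp hmp
    set S : Set G := {r | r ∈ Q.P ∧ (ZQL (Fin N)).le m (θ.toFun r) ∧ Q.le r p} with hSdef
    have hpS : p ∈ S := ⟨hp, hmp, Q.myle_refl p⟩
    have hSfin : S.Finite := by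
      have hpi : (Set.pi Set.univ (fun i => Set.Icc (Multiplicative.toAdd m i)
          (Multiplicative.toAdd (θ.toFun p) i))).Finite :=
        Set.Finite.pi fun i => Set.finite_Icc _ _
      have hT : {x : Multiplicative (Fin N → ℤ) |
          (ZQL (Fin N)).le m x ∧ (ZQL (Fin N)).le x (θ.toFun p)}.Finite := by
        have hpre : (Multiplicative.toAdd ⁻¹' (Set.pi Set.univ
            (fun i => Set.Icc (Multiplicative.toAdd m i)
              (Multiplicative.toAdd (θ.toFun p) i)))).Finite :=
          hpi.preimage (Multiplicative.toAdd.injective.injOn)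
        refine hpre.subset ?_
        rintro x ⟨h1, h2⟩ i _
        have h1i := h1 i
        have h2i := h2 i
        simp only [ZQL, QuasiLattice.le, Set.mem_setOf_eq, toAdd_mul, toAdd_inv,
          Pi.add_apply, Pi.neg_apply] at h1i h2i
        constructor <;> omega
      have hsub : S ⊆ ⋃ x ∈ {x : Multiplicative (Fin N → ℤ) |
          (ZQL (Fin N)).le m x ∧ (ZQL (Fin N)).le x (θ.toFun p)},
          {r | r ∈ Q.P ∧ θ.toFun r = x} := by
        rintro r ⟨hrP, hmr, hrp⟩
        exact Set.mem_biUnion ⟨hmr, θ_mono r p hrp⟩ ⟨hrP, rfl⟩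
      exact (hT.biUnion fun x _ => θ.finite_fibers x).subset hsub
    obtain ⟨r, hrS, hrp, hrmin⟩ := exists_minimal_in_finite Q S hSfin hpS
    refine ⟨r, ⟨hrS.1, hrS.2.1, ?_⟩, hrp⟩
    intro x hxP hmx hxr
    exact hrmin x ⟨hxP, hmx, Q.myle_trans hxr hrp⟩ hxr
  constructor
  · intro p hp hmp
    obtain ⟨r, hrmin, hrp⟩ := exists_min p hp hmp
    refine ⟨r, ⟨hrmin, hrp⟩, ?_⟩
    rintro r' ⟨hr'min, hr'p⟩
    by_contra hne
    exact hmin m hm r' r hr'min hrmin hne ⟨p, hp, hr'p, hrp⟩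
  · rintro r hr m' hm' hnot q hq hmq hqm' ⟨s, hsP, hrs, hqs⟩
    obtain ⟨r', hr'min, hr'q⟩ := exists_min q hq hmq
    by_cases h : r' = r
    · subst h
      exact hnot ((ZQL (Fin N)).myle_trans (θ_mono r' q hr'q) hqm')
    · exact hmin m hm r' r hr'min hr h ⟨s, hsP, Q.myle_trans hr'q hqs, hrs⟩
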